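/- The Held–Spirkl recursion identity: for Boolean variables t_0,...,t_{m-1} and an integer λ with 2λ < m - 1, g(t_0,...,t_{m-1}) = g(t_0,...,t_{2λ}) ∧ ((t_1 ∨ t_3 ∨ ... ∨ t_{2λ+1}) ∨ g(t_{2λ+2},...,t_{m-1})). -/

import Mathlib

mutual
  /-- And-Or path starting with AND: `gA [t₀,…,t_{m-1}] = t₀ ∧ (t₁ ∨ (t₂ ∧ …))`. -/
  def gA : List Bool → Bool
    | [] => false
    | t :: r => t && gO r
  /-- Dual And-Or path starting with OR: `gO [t₀,…] = t₀ ∨ (t₁ ∧ …)`. -/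
  def gO : List Bool → Bool
    | [] => true
    | t :: r => t || gA r
end

private lemma bkey (A D a b C : Bool) :
    ((A && (D || a)) && ((D || b) || C)) = (A && (D || (a && (b || C)))) := by
  cases A <;> cases D <;> cases a <;> cases b <;> cases C <;> rfl

/-- Held–Spirkl recursion: for `2λ < m - 1`,
`g(t₀,…,t_{m-1}) = g(t₀,…,t_{2λ}) ∧ ((t₁ ∨ t₃ ∨ … ∨ t_{2λ+1}) ∨ g(t_{2λ+2},…,t_{m-1}))`. -/
theorem aop_recursion_held_spirkl (m lam : ℕ) (t : ℕ → Bool) (h : 2 * lam + 1 < m) :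
    gA ((List.range m).map t) =
      (gA ((List.range (2 * lam + 1)).map t) &&
        ((((List.range' 1 (lam + 1) 2).map t).any id) ||
          gA ((List.range' (2 * lam + 2) (m - (2 * lam + 2))).map t))) := by
  induction lam generalizing m with
  | zero =>
    obtain ⟨k, rfl⟩ : ∃ k, m = k + 2 := ⟨m - 2, by omega⟩
    have : List.range (k + 2) = 0 :: 1 :: List.range' 2 k := by
      rw [List.range_eq_range']
      simp [List.range'_succ]
    simp [this, gA, gO, List.range'_succ, List.range_succ]
  | succ n ih =>
    have h1 : 2 * n + 1 < m := by omega
    rw [ih m h1, show 2 * (n + 1) + 1 = 2 * n + 3 from by ring,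
      show 2 * (n + 1) + 2 = 2 * n + 4 from by ring, ih (2 * n + 3) (by omega)]
    have e1 : (2 * n + 3) - (2 * n + 2) = 1 := by omega
    have e2 : m - (2 * n + 2) = (m - (2 * n + 4)) + 2 := by omega
    have e5 : List.range' 1 (n + 1 + 1) 2 = List.range' 1 (n + 1) 2 ++ [2 * n + 3] := by
      rw [List.range'_concat]; ring_nf
    rw [e1, e2, e5]
    simp only [List.range'_succ, List.map_cons, List.map_append, List.map_nil,
      List.any_append, List.any_cons, List.any_nil, gA, gO]
    rw [show 2 * n + 2 + 2 = 2 * n + 4 from by ring, bkey]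
    simp [gO, show 2 * n + 2 + 1 = 2 * n + 3 from by ring, Bool.or_assoc, Bool.or_comm, Bool.or_left_comm]
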